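/- arXiv:2105.11719 — 2 statements merged into one kernel-verified Lean document; each statement's English description precedes it below -/
import Mathlib

section
/- Let N ≥ 2 and let l ≥ 2 be an integer with l² ∣ N. Then the constant 2l-tuple (N/l mod N, …, N/l mod N) of elements of ℤ/Nℤ is a solution of (E_N); more precisely, M_{2l}(N/l, …, N/l) = (−1)^l · Id in SL_2(ℤ/Nℤ). -/
open Matrix

/-- `Mmat [a₁, …, aₙ]` is the product `[[aₙ,-1],[1,0]] ⋯ [[a₁,-1],[1,0]]`. -/
def Mmat {R : Type*} [CommRing R] : List R → Matrix (Fin 2) (Fin 2) R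
  | [] => 1
  | a :: t => Mmat t * !![a, -1; 1, 0]

/-- A tuple is a solution of (E_N) if its matrix is `Id` or `-Id`. -/
def IsSolution {R : Type*} [CommRing R] (l : List R) : Prop :=
  Mmat l = 1 ∨ Mmat l = -1

/-- The sum `(a₁,…,aₙ) ⊕ (b₁,…,bₘ) = (a₁+bₘ, a₂,…,aₙ₋₁, aₙ+b₁, b₂,…,bₘ₋₁)`. -/
def oplus {R : Type*} [CommRing R] (a b : List R) : List R :=
  List.ofFn (fun i : Fin (a.length + b.length - 2) =>
    if (i : ℕ) = 0 then a.getD 0 0 + b.getD (b.length - 1) 0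
    else if (i : ℕ) < a.length - 1 then a.getD (i : ℕ) 0
    else if (i : ℕ) = a.length - 1 then a.getD (a.length - 1) 0 + b.getD 0 0
    else b.getD ((i : ℕ) - a.length + 1) 0)

/-- Two tuples are equivalent if one is a cyclic permutation of the other or of
its reversal. -/
def TupleEquiv {R : Type*} (a b : List R) : Prop :=
  (∃ k, b = a.rotate k) ∨ (∃ k, b = a.reverse.rotate k)

/-- A solution `c` (of size ≥ 3) is reducible if `c ∼ a ⊕ b` with `b` a solution,
`a` of size ≥ 3 and `b` of size ≥ 3. -/
def Reducible {R : Type*} [CommRing R] (c : List R) : Prop :=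
  ∃ a b : List R, 3 ≤ a.length ∧ 3 ≤ b.length ∧ IsSolution b ∧
    TupleEquiv c (oplus a b)

/-- The alternating tuple `(k, -k, k, -k, …)` of length `n`. -/
def altList {R : Type*} [CommRing R] (n : ℕ) (k : R) : List R :=
  List.ofFn (fun i : Fin n => if (i : ℕ) % 2 = 0 then k else -k)

/-- Continuants: `K₋₁ = 0`, `K₀ = 1`,
`Kₙ(x₁,…,xₙ) = x₁·Kₙ₋₁(x₂,…,xₙ) - Kₙ₋₂(x₃,…,xₙ)`. -/
def contK {R : Type*} [CommRing R] : List R → R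
  | [] => 1
  | [x] => x
  | x :: y :: t => x * contK (y :: t) - contK t


lemma Mmat_replicate {R : Type*} [CommRing R] (x : R) :
    ∀ n, Mmat (List.replicate n x) = (!![x, -1; 1, 0]) ^ n
  | 0 => rfl
  | n + 1 => by
      rw [List.replicate_succ, Mmat, Mmat_replicate x n, pow_succ]

lemma pow_aux {R : Type*} [CommRing R] (a : R) (h : a * a = 0) :
    ∀ k : ℕ, (!![(-1 : R), -a; a, -1]) ^ k =
      !![(-1) ^ k, (-1) ^ k * k * a; -((-1) ^ k * k * a), (-1) ^ k]
  | 0 => by simp [Matrix.one_fin_two]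
  | k + 1 => by
      rw [pow_succ, pow_aux a h k, Matrix.mul_fin_two]
      ext i j
      fin_cases i <;> fin_cases j <;>
        simp [pow_succ, Nat.cast_succ] <;>
        first
          | linear_combination (↑k * (-1 : R) ^ k) * h
          | ring

theorem replicate_div_sq_solution (N l : ℕ) (hN : 2 ≤ N) (hl : 2 ≤ l) (hdvd : l ^ 2 ∣ N) :
    Mmat (List.replicate (2 * l) ((N / l : ℕ) : ZMod N)) = (-1) ^ l ∧
    IsSolution (List.replicate (2 * l) ((N / l : ℕ) : ZMod N)) := by
  have hl0 : 0 < l := by omega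
  have hlN : l ∣ N := dvd_trans (dvd_pow_self l (by norm_num)) hdvd
  obtain ⟨m, hm⟩ := hdvd
  have hdiv : N / l = l * m := by
    rw [hm, pow_two, mul_assoc, Nat.mul_div_cancel_left _ hl0]
  have ha2 : ((N / l : ℕ) : ZMod N) * ((N / l : ℕ) : ZMod N) = 0 := by
    rw [← Nat.cast_mul]
    have h2 : (N / l) * (N / l) = N * m := by
      rw [hdiv, hm]; ring
    rw [h2, Nat.cast_mul, ZMod.natCast_self, zero_mul]
  have hla : (l : ZMod N) * ((N / l : ℕ) : ZMod N) = 0 := by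
    rw [← Nat.cast_mul, Nat.mul_div_cancel' hlN, ZMod.natCast_self]
  have hB2 : (!![((N / l : ℕ) : ZMod N), -1; 1, 0]) ^ 2 =
      !![(-1 : ZMod N), -((N / l : ℕ) : ZMod N); ((N / l : ℕ) : ZMod N), -1] := by
    rw [pow_two, Matrix.mul_fin_two]
    ext i j
    fin_cases i <;> fin_cases j <;> simp [ha2]
  have key : Mmat (List.replicate (2 * l) ((N / l : ℕ) : ZMod N)) = (-1) ^ l := by
    rw [Mmat_replicate, pow_mul, hB2, pow_aux _ ha2 l, mul_assoc, hla, mul_zero]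
    rcases Nat.even_or_odd l with he | ho
    · rw [he.neg_one_pow, he.neg_one_pow]
      simp [Matrix.one_fin_two]
    · rw [ho.neg_one_pow, ho.neg_one_pow]
      ext i j
      fin_cases i <;> fin_cases j <;> simp
  refine ⟨key, ?_⟩
  rcases Nat.even_or_odd l with he | ho
  · left; rw [key, he.neg_one_pow]
  · right; rw [key, ho.neg_one_pow]
end

section
/- Let N ≥ 2, let n ≥ 5 be an odd integer, and let a, b, k ∈ ℤ/Nℤ. If the n-tuple (a, k, −k, k, −k, …, −k, k, b), whose first entry is a, whose last entry is b, and whose n−2 middle entries alternate k, −k, k, …, k starting and ending with k, is a solution of (E_N), then a = b and a·(k + a) = 2 in ℤ/Nℤ. -/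
open Matrix

lemma Mmat_append {R : Type*} [CommRing R] (l₁ l₂ : List R) :
    Mmat (l₁ ++ l₂) = Mmat l₂ * Mmat l₁ := by
  induction l₁ with
  | nil => simp [Mmat]
  | cons x t ih => simp [Mmat, ih, mul_assoc]

lemma altList_succ_succ {R : Type*} [CommRing R] (n : ℕ) (k : R) :
    altList (n + 2) k = k :: -k :: altList n k := by
  unfold altList
  rw [List.ofFn_succ, List.ofFn_succ]
  norm_num
  funext i
  have h : ((i:ℕ)+1+1)%2 = (i:ℕ)%2 := by omega
  simp [h]

lemma alt_form {R : Type*} [CommRing R] (k : R) (m : ℕ) :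
    ∃ p q r : R, Mmat (altList (2 * m + 1) k) = !![p, q; -q, r] ∧ p + r = -(k * q) := by
  induction m with
  | zero =>
    refine ⟨k, -1, 0, ?_, by ring⟩
    show Mmat (altList 1 k) = _
    have : altList 1 k = [k] := by simp [altList]
    rw [this]
    show (1 : Matrix (Fin 2) (Fin 2) R) * _ = _
    rw [one_mul]
    congr 1
    norm_num
  | succ m ih =>
    obtain ⟨p, q, r, hM, hpr⟩ := ih
    refine ⟨-(k^2+1)*p + q*k, p*k - q, -q*k - r, ?_, by linear_combination -hpr⟩
    have h2 : 2 * (m + 1) + 1 = (2 * m + 1) + 2 := by ring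
    rw [h2, altList_succ_succ]
    show Mmat (-k :: altList (2*m+1) k) * _ = _
    show Mmat (altList (2*m+1) k) * _ * _ = _
    rw [hM]
    have hr : r = -(k * q) - p := by linear_combination hpr
    subst hr
    ext i j
    fin_cases i <;> fin_cases j <;>
      simp [Matrix.mul_apply, Fin.sum_univ_two] <;> ring

theorem dynomial_ends_odd (N : ℕ) (hN : 2 ≤ N) (n : ℕ) (hn : 5 ≤ n) (hodd : Odd n)
    (a b k : ZMod N)
    (h : IsSolution (a :: (altList (n - 2) k ++ [b]))) :
    a = b ∧ a * (k + a) = 2 := by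
  obtain ⟨j, hj⟩ := hodd
  have hm : n - 2 = 2 * (j - 1) + 1 := by omega
  obtain ⟨p, q, r, hM, hpr⟩ := alt_form k (j - 1)
  rw [← hm] at hM
  have hfull : Mmat (a :: (altList (n - 2) k ++ [b])) =
      (!![b, -1; 1, 0] * !![p, q; -q, r]) * !![a, -1; 1, 0] := by
    show Mmat (altList (n - 2) k ++ [b]) * _ = _
    rw [Mmat_append, hM]
    congr 2
    show (1 : Matrix (Fin 2) (Fin 2) (ZMod N)) * _ = _
    rw [one_mul]
  rcases h with h | h <;> rw [hfull] at h <;>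
  [ (have h00 := congrFun (congrFun h 0) 0;
     have h01 := congrFun (congrFun h 0) 1;
     have h10 := congrFun (congrFun h 1) 0;
     have h11 := congrFun (congrFun h 1) 1);
    (have h00 := congrFun (congrFun h 0) 0;
     have h01 := congrFun (congrFun h 0) 1;
     have h10 := congrFun (congrFun h 1) 0;
     have h11 := congrFun (congrFun h 1) 1)] <;>
  simp [Matrix.mul_apply, Fin.sum_univ_two, Matrix.one_apply] at h00 h01 h10 h11 <;>
  [ (have hab : a = b := by linear_combination -h01 - h10 - (a-b)*h11);
    (have hab : a = b := by linear_combination h01 + h10 - (a-b)*h11)] <;>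
  refine ⟨hab, ?_⟩ <;>
  [ linear_combination hpr + h00 + a*h01 + h11 - (k+b)*(h10 + a*h11) + a*hab;
    linear_combination -hpr - h00 - a*h01 + h11 + (k+b)*(h10 - a*h11) + a*hab]
end
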